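/- Let k ≥ 1 and ξ ≥ 1 be integers, and let G_ξ be the graph obtained from ξ disjoint copies of D_{k+1} by identifying all copies of the vertex u with one another and all copies of the vertex v with one another, the copies being otherwise pairwise disjoint. Let γ_ξ be the coloring of G_ξ whose restriction to each copy of D_{k+1} is γ. Then γ_ξ is a proper 3-coloring of G_ξ, and it is the unique proper 3-coloring σ of G_ξ with σ(u) = 3 and σ(v) = 1. -/

import Mathlib

/-- Vertices of the graph `G_ξ`, obtained from `ξ` disjoint copies of `D_K` by
identifying all copies of `u` and all copies of `v`:  `u` and `v` are shared, and each
of the remaining vertices of `D_K` carries a copy index `c : Fin ξ`.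
(`x c i` models the vertex `x_{i+1}` of copy `c`, and `a c i`, `b c i` model the
vertices `v_{1,i+1}`, `v_{2,i+1}` of copy `c`.) -/
inductive GVert (K ξ : ℕ) : Type
  | u : GVert K ξ
  | v : GVert K ξ
  | z : Fin ξ → GVert K ξ
  | x : Fin ξ → Fin K → GVert K ξ
  | a : Fin ξ → Fin (K - 1) → GVert K ξ
  | b : Fin ξ → Fin (K - 1) → GVert K ξ

/-- The edges of `G_ξ`: inside each copy `c`, exactly the edges of `D_K`
(`uz`, `ux_K`, `vx_K`, `zx_1`, `z v_{1,i}`, and the triangles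
`{x_i, v_{1,i}, v_{2,i}}`, `{x_{i+1}, v_{1,i}, v_{2,i}}`). -/
def GRel (K ξ : ℕ) : GVert K ξ → GVert K ξ → Prop
  | .u, .z _ => True
  | .u, .x _ i => (i : ℕ) = K - 1
  | .v, .x _ i => (i : ℕ) = K - 1
  | .z c, .x c' i => c = c' ∧ (i : ℕ) = 0
  | .z c, .a c' _ => c = c'
  | .x c j, .a c' i => c = c' ∧ ((j : ℕ) = (i : ℕ) ∨ (j : ℕ) = (i : ℕ) + 1)
  | .x c j, .b c' i => c = c' ∧ ((j : ℕ) = (i : ℕ) ∨ (j : ℕ) = (i : ℕ) + 1)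
  | .a c i, .b c' j => c = c' ∧ (i : ℕ) = (j : ℕ)
  | _, _ => False

/-- The graph `G_ξ` built from `ξ` copies of `D_K` glued along `u` and `v`. -/
def Ggraph (K ξ : ℕ) : SimpleGraph (GVert K ξ) := SimpleGraph.fromRel (GRel K ξ)

/-- The coloring `γ_ξ` of `G_ξ`, restricting on each copy of `D_K` to the coloring `γ`
(colors `1, 2, 3` are modelled as `0, 1, 2 : Fin 3`): `γ(u) = 3`, `γ(v) = 1`,
`γ(z) = 1`, `γ(xᵢ) = 2`, `γ(v_{1,i}) = 3`, `γ(v_{2,i}) = 1`. -/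
def γG (K ξ : ℕ) : GVert K ξ → Fin 3
  | .u => 2
  | .v => 0
  | .z _ => 0
  | .x _ _ => 1
  | .a _ _ => 2
  | .b _ _ => 0

/-- For integers `k ≥ 1` and `ξ ≥ 1`, the coloring `γ_ξ` is a proper 3-coloring of the
graph `G_ξ` (built from `ξ` copies of `D_{k+1}`), and it is the unique proper
3-coloring `σ` of `G_ξ` with `σ(u) = 3` and `σ(v) = 1` (i.e. `2` and `0 : Fin 3`). -/
theorem stmt11 (k ξ : ℕ) (hk : 1 ≤ k) (hξ : 1 ≤ ξ) :
    (∀ p q, (Ggraph (k + 1) ξ).Adj p q → γG (k + 1) ξ p ≠ γG (k + 1) ξ q) ∧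
    (∀ σ : GVert (k + 1) ξ → Fin 3,
      (∀ p q, (Ggraph (k + 1) ξ).Adj p q → σ p ≠ σ q) →
      σ .u = 2 → σ .v = 0 → σ = γG (k + 1) ξ) := by

  have fin3a : ∀ p : Fin 3, p ≠ 2 → p ≠ 0 → p = 1 := by decide
  have fin3b : ∀ p q r : Fin 3, q ≠ 1 → r ≠ 1 → q ≠ r → p ≠ q → p ≠ r → p = 1 := by decide
  have fin3c : ∀ p : Fin 3, p ≠ 2 → p ≠ 1 → p = 0 := by decide
  have fin3d : ∀ p : Fin 3, p ≠ 0 → p ≠ 1 → p = 2 := by decide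
  constructor
  · intro p q hadj
    rw [Ggraph, SimpleGraph.fromRel_adj] at hadj
    obtain ⟨hne, h | h⟩ := hadj <;> cases p <;> cases q <;>
      simp only [GRel] at h <;> first | exact h.elim | (simp only [γG]; decide)
  · intro σ hp hu hv
    have hadj : ∀ p q, p ≠ q → (GRel (k+1) ξ p q ∨ GRel (k+1) ξ q p) → σ p ≠ σ q := by
      intro p q h1 h2
      exact hp p q ((SimpleGraph.fromRel_adj _ _ _).2 ⟨h1, h2⟩)
    have hx : ∀ (c : Fin ξ) (i : Fin (k+1)), σ (.x c i) = 1 := by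
      intro c
      have main : ∀ m, m ≤ k → σ (.x c ⟨k - m, by omega⟩) = 1 := by
        intro m
        induction m with
        | zero =>
          intro _
          apply fin3a
          · rw [← hu]
            exact (hadj .u (.x c ⟨k, by omega⟩) (fun h => nomatch h)
              (Or.inl (by simp [GRel]))).symm
          · rw [← hv]
            exact (hadj .v (.x c ⟨k, by omega⟩) (fun h => nomatch h)
              (Or.inl (by simp [GRel]))).symm
        | succ m ih =>
          intro hm
          have hprev := ih (by omega)
          set i : Fin (k + 1 - 1) := ⟨k - (m + 1), by omega⟩ with hi
          have hxa : σ (.x c ⟨k - m, by omega⟩) ≠ σ (.a c i) :=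
            hadj _ _ (fun h => nomatch h)
              (Or.inl ⟨rfl, by simp [hi]; omega⟩)
          have hxb : σ (.x c ⟨k - m, by omega⟩) ≠ σ (.b c i) :=
            hadj _ _ (fun h => nomatch h)
              (Or.inl ⟨rfl, by simp [hi]; omega⟩)
          have hab : σ (.a c i) ≠ σ (.b c i) :=
            hadj _ _ (fun h => nomatch h) (Or.inl ⟨rfl, rfl⟩)
          have hla : σ (.x c ⟨k - (m+1), by omega⟩) ≠ σ (.a c i) :=
            hadj _ _ (fun h => nomatch h)
              (Or.inl ⟨rfl, Or.inl (by simp [hi])⟩)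
          have hlb : σ (.x c ⟨k - (m+1), by omega⟩) ≠ σ (.b c i) :=
            hadj _ _ (fun h => nomatch h)
              (Or.inl ⟨rfl, Or.inl (by simp [hi])⟩)
          exact fin3b _ _ _ (fun h => hxa (hprev.trans h.symm))
            (fun h => hxb (hprev.trans h.symm)) hab hla hlb
      intro i
      have h := main (k - i) (by omega)
      have : (⟨k - (k - (i : ℕ)), by omega⟩ : Fin (k+1)) = i := by
        apply Fin.ext
        simp
        omega
      rwa [this] at h
    have hz : ∀ c : Fin ξ, σ (.z c) = 0 := by
      intro c
      apply fin3c
      · rw [← hu]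
        exact (hadj .u (.z c) (fun h => nomatch h) (Or.inl trivial)).symm
      · rw [← hx c ⟨0, by omega⟩]
        exact hadj (.z c) (.x c ⟨0, by omega⟩) (fun h => nomatch h)
          (Or.inl ⟨rfl, rfl⟩)
    have ha : ∀ (c : Fin ξ) (i : Fin (k + 1 - 1)), σ (.a c i) = 2 := by
      intro c i
      apply fin3d
      · rw [← hz c]
        exact (hadj (.z c) (.a c i) (fun h => nomatch h) (Or.inl rfl)).symm
      · rw [← hx c ⟨i, by omega⟩]
        exact (hadj (.x c ⟨i, by omega⟩) (.a c i) (fun h => nomatch h)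
          (Or.inl ⟨rfl, Or.inl rfl⟩)).symm
    have hb : ∀ (c : Fin ξ) (i : Fin (k + 1 - 1)), σ (.b c i) = 0 := by
      intro c i
      apply fin3c
      · rw [← ha c i]
        exact (hadj (.a c i) (.b c i) (fun h => nomatch h)
          (Or.inl ⟨rfl, rfl⟩)).symm
      · rw [← hx c ⟨i, by omega⟩]
        exact (hadj (.x c ⟨i, by omega⟩) (.b c i) (fun h => nomatch h)
          (Or.inl ⟨rfl, Or.inl rfl⟩)).symm
    funext p
    cases p with
    | u => exact hu
    | v => exact hv
    | z c => exact hz c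
    | x c i => exact hx c i
    | a c i => exact ha c i
    | b c i => exact hb c i
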